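/- Let Λ ⊆ ℝ^n be a lattice, Φ an injective endomorphism of ℝ^n with Φ(Λ) ⊆ Λ, and ‖·‖ a vector norm with induced operator norm satisfying ‖Φ^{−1}‖ < 1. Let D ⊆ Λ be a finite digit set, M̃ := max{‖η‖ : η ∈ D}, and M := (‖Φ^{−1}‖/(1 − ‖Φ^{−1}‖)) · M̃. Then the map T(β) = Φ^{−1}(β − d(β)) (where d(β) ∈ D) satisfies: ‖T(β)‖ < ‖β‖ whenever ‖β‖ > M, and ‖T(β)‖ ≤ M whenever ‖β‖ ≤ M. Consequently, for every α ∈ Λ the orbit sequence (T^k(α))_{k ≥ 0} is eventually periodic. -/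

import Mathlib

/-- With a finite digit set `D` and `‖Φ⁻¹‖ < 1`, the map
`T(β) = Φ⁻¹(β - d(β))` is norm-decreasing outside the ball of radius `M` and
maps that ball into itself; consequently every orbit `(T^k(α))` is eventually
periodic. -/
theorem finite_digit_set_orbit_eventually_periodic
    {E : Type*} [NormedAddCommGroup E] [NormedSpace ℝ E] [FiniteDimensional ℝ E]
    {n : ℕ} (b : Module.Basis (Fin n) ℝ E)
    (Λ : Set E) (hΛ : Λ = ↑(Submodule.span ℤ (Set.range ⇑b)))
    (Φ : E ≃ₗ[ℝ] E) (hΦΛ : ∀ x ∈ Λ, Φ x ∈ Λ)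
    (q : ℝ) (hq : q = ‖LinearMap.toContinuousLinearMap (Φ.symm : E →ₗ[ℝ] E)‖)
    (hq1 : q < 1)
    (D : Finset E) (hDΛ : ↑D ⊆ Λ) (hD0 : (0 : E) ∈ D)
    (Mt M : ℝ)
    (hMt : Mt = D.sup' ⟨0, hD0⟩ (fun η => ‖η‖))
    (hM : M = q / (1 - q) * Mt)
    (d T : E → E)
    (hdD : ∀ α ∈ Λ, d α ∈ D)
    (hT : ∀ α : E, Φ (T α) = α - d α)
    (hTΛ : ∀ α ∈ Λ, T α ∈ Λ) :
    (∀ β ∈ Λ, (M < ‖β‖ → ‖T β‖ < ‖β‖) ∧ (‖β‖ ≤ M → ‖T β‖ ≤ M)) ∧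
      (∀ α ∈ Λ, ∃ (i p : ℕ), 0 < p ∧ ∀ k : ℕ, i ≤ k → T^[k + p] α = T^[k] α) := by
  have hq0 : 0 ≤ q := hq ▸ norm_nonneg _
  have hMt0 : 0 ≤ Mt := by
    rw [hMt]
    exact le_trans (norm_nonneg (0 : E)) (Finset.le_sup' (fun η => ‖η‖) hD0)
  have hqlt : 0 < 1 - q := by linarith
  have hMq : M * (1 - q) = q * Mt := by
    rw [hM]; field_simp
  have hM0 : 0 ≤ M := by
    rw [hM]
    exact mul_nonneg (div_nonneg hq0 hqlt.le) hMt0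
  -- key bound: ‖T β‖ ≤ q * (‖β‖ + Mt) for β ∈ Λ
  have key : ∀ β ∈ Λ, ‖T β‖ ≤ q * (‖β‖ + Mt) := by
    intro β hβ
    have hTβ : T β = Φ.symm (β - d β) := by
      rw [← hT β, LinearEquiv.symm_apply_apply]
    have h1 : ‖T β‖ ≤ q * ‖β - d β‖ := by
      rw [hTβ, hq]
      exact (LinearMap.toContinuousLinearMap (Φ.symm : E →ₗ[ℝ] E)).le_opNorm (β - d β)
    have h2 : ‖β - d β‖ ≤ ‖β‖ + Mt := by
      refine le_trans (norm_sub_le _ _) (add_le_add_right ?_ _)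
      rw [hMt]
      exact Finset.le_sup' (fun η => ‖η‖) (hdD β hβ)
    calc ‖T β‖ ≤ q * ‖β - d β‖ := h1
      _ ≤ q * (‖β‖ + Mt) := by nlinarith
  have hcontract : ∀ β ∈ Λ, (M < ‖β‖ → ‖T β‖ < ‖β‖) ∧ (‖β‖ ≤ M → ‖T β‖ ≤ M) := by
    intro β hβ
    have h := key β hβ
    constructor
    · intro hMβ; nlinarith
    · intro hβM; nlinarith
  refine ⟨hcontract, fun α hα => ?_⟩
  -- all iterates stay in Λ and have norm ≤ max M ‖α‖
  set R := max M ‖α‖ with hR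
  have horb : ∀ k : ℕ, T^[k] α ∈ Λ ∧ ‖T^[k] α‖ ≤ R := by
    intro k
    induction k with
    | zero => exact ⟨hα, le_max_right _ _⟩
    | succ k ih =>
      obtain ⟨hmem, hnorm⟩ := ih
      rw [Function.iterate_succ_apply']
      refine ⟨hTΛ _ hmem, ?_⟩
      rcases le_or_gt ‖T^[k] α‖ M with h | h
      · exact le_trans ((hcontract _ hmem).2 h) (le_max_left _ _)
      · exact le_trans ((hcontract _ hmem).1 h).le hnorm
  -- the orbit lies in a finite set
  have hfin : Set.Finite (Metric.closedBall (0 : E) R ∩ Λ) := by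
    rw [hΛ]
    change (_ ∩ (Submodule.span ℤ (Set.range ⇑b)).toAddSubgroup : Set E).Finite
    have : DiscreteTopology (Submodule.span ℤ (Set.range ⇑b)).toAddSubgroup :=
      (inferInstance : DiscreteTopology (Submodule.span ℤ (Set.range ⇑b)))
    exact Metric.finite_isBounded_inter_isClosed DiscreteTopology.isDiscrete Metric.isBounded_closedBall inferInstance
  have hmaps : Set.MapsTo (fun k : ℕ => T^[k] α) Set.univ
      (Metric.closedBall (0 : E) R ∩ Λ) := by
    intro k _
    exact ⟨mem_closedBall_zero_iff.mpr (horb k).2, (horb k).1⟩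
  obtain ⟨i, -, j, -, hne, heq⟩ :=
    Set.Infinite.exists_ne_map_eq_of_mapsTo Set.infinite_univ hmaps hfin
  have main : ∀ i j : ℕ, i < j → T^[i] α = T^[j] α →
      ∃ (i p : ℕ), 0 < p ∧ ∀ k : ℕ, i ≤ k → T^[k + p] α = T^[k] α := by
    intro i j hij heq
    refine ⟨i, j - i, Nat.sub_pos_of_lt hij, fun k hk => ?_⟩
    obtain ⟨m, rfl⟩ := Nat.exists_eq_add_of_le hk
    have hj : i + (j - i) = j := Nat.add_sub_cancel' hij.le
    calc T^[i + m + (j - i)] α = T^[m + (i + (j - i))] α := by ring_nf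
      _ = T^[m] (T^[j] α) := by rw [hj, Function.iterate_add_apply]
      _ = T^[m] (T^[i] α) := by rw [heq]
      _ = T^[m + i] α := by rw [Function.iterate_add_apply]
      _ = T^[i + m] α := by rw [Nat.add_comm]
  rcases hne.lt_or_gt with hij | hij
  · exact main i j hij heq
  · exact main j i hij heq.symm
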